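/- Let P be a finite poset on n elements whose incomparability graph is connected. Then the complementary digraph of D_P has at least one Hamiltonian cycle (for n ≥ 2). -/

import Mathlib

/-- The incomparability graph of a poset. -/
def incGraph (α : Type*) [PartialOrder α] : SimpleGraph α where
  Adj a b := a ≠ b ∧ ¬ a ≤ b ∧ ¬ b ≤ a
  symm := by constructor; intro a b h; exact ⟨h.1.symm, h.2.2, h.2.1⟩
  loopless := by constructor; intro a h; exact h.1 rfl

section AuxHam

variable {α : Type*} [PartialOrder α] [DecidableEq α]

/-- Incomparability relation restricted to a finset. -/
def Rinc (s : Finset α) (a b : α) : Prop := a ∈ s ∧ b ∈ s ∧ ¬ a ≤ b ∧ ¬ b ≤ a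

/-- Connectivity of the incomparability relation on a finset. -/
def IncConn (s : Finset α) : Prop :=
  ∀ a ∈ s, ∀ b ∈ s, Relation.ReflTransGen (Rinc s) a b

lemma Rinc.symm' {s : Finset α} {a b : α} (h : Rinc s a b) : Rinc s b a :=
  ⟨h.2.1, h.1, h.2.2.2, h.2.2.1⟩

lemma rinc_reach_symm {s : Finset α} {a b : α}
    (h : Relation.ReflTransGen (Rinc s) a b) : Relation.ReflTransGen (Rinc s) b a := by
  induction h with
  | refl => exact .refl
  | tail _ h2 ih => exact Relation.ReflTransGen.trans (Relation.ReflTransGen.single h2.symm') ih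

lemma rinc_reach_mono {s s' : Finset α} (hss : s ⊆ s') {a b : α}
    (h : Relation.ReflTransGen (Rinc s) a b) : Relation.ReflTransGen (Rinc s') a b :=
  Relation.ReflTransGen.mono (r := Rinc s) (p := Rinc s') (fun _ _ huv => ⟨hss huv.1, hss huv.2.1, huv.2.2.1, huv.2.2.2⟩) a b h

open Classical in
/-- The connected component of `y` in the incomparability graph on `t`. -/
noncomputable def IncComp (t : Finset α) (y : α) : Finset α :=
  t.filter (fun c => Relation.ReflTransGen (Rinc t) y c)

open Classical in
lemma mem_IncComp {t : Finset α} {y c : α} :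
    c ∈ IncComp t y ↔ c ∈ t ∧ Relation.ReflTransGen (Rinc t) y c := by
  simp [IncComp]

lemma reach_mem_comp {t : Finset α} {y c : α} (hy : y ∈ t)
    (h : Relation.ReflTransGen (Rinc t) y c) : c ∈ IncComp t y := by
  induction h with
  | refl => exact mem_IncComp.2 ⟨hy, .refl⟩
  | tail h1 h2 ih => exact mem_IncComp.2 ⟨h2.2.1, (mem_IncComp.1 ih).2.tail h2⟩

lemma IncComp_subset {t : Finset α} {y : α} : IncComp t y ⊆ t := fun _ hc =>
  (mem_IncComp.1 hc).1

lemma reach_comp_up {t : Finset α} {y c : α} (hy : y ∈ t)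
    (h : Relation.ReflTransGen (Rinc t) y c) :
    Relation.ReflTransGen (Rinc (IncComp t y)) y c := by
  induction h with
  | refl => exact .refl
  | tail h1 h2 ih =>
      exact ih.tail ⟨reach_mem_comp hy h1, reach_mem_comp hy (h1.tail h2), h2.2.2.1, h2.2.2.2⟩

lemma conn_comp {t : Finset α} {y : α} (hy : y ∈ t) : IncConn (IncComp t y) := by
  intro a ha b hb
  exact (rinc_reach_symm (reach_comp_up hy (mem_IncComp.1 ha).2)).trans
    (reach_comp_up hy (mem_IncComp.1 hb).2)

/-- If `y` is maximal in `t`, every element outside its component is below all of it. -/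
lemma comp_top {t : Finset α} {y : α} (hy : y ∈ t)
    (hmax : ∀ z ∈ t, ¬ y < z) {d : α} (hd : d ∈ t) (hdC : d ∉ IncComp t y)
    {c : α} (hc : c ∈ IncComp t y) : d < c := by
  obtain ⟨hct, hreach⟩ := mem_IncComp.1 hc
  clear hct hc
  induction hreach with
  | refl =>
      by_cases hle : d ≤ y
      · rcases lt_or_eq_of_le hle with h | h
        · exact h
        · subst h; exact absurd (mem_IncComp.2 ⟨hy, .refl⟩) hdC
      · by_cases hle2 : y ≤ d
        · exact absurd (lt_of_le_of_ne hle2 (fun h => hle (le_of_eq h.symm))) (hmax d hd)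
        · exact absurd (reach_mem_comp hy (Relation.ReflTransGen.single ⟨hy, hd, hle2, hle⟩)) hdC
  | @tail b c h1 h2 ih =>
      have hdb : d < b := ih
      have hcC : c ∈ IncComp t y := reach_mem_comp hy (h1.tail h2)
      by_cases hle : d ≤ c
      · rcases lt_or_eq_of_le hle with h | h
        · exact h
        · subst h; exact absurd hcC hdC
      · by_cases hle2 : c ≤ d
        · exact absurd (hle2.trans hdb.le) h2.2.2.2
        · exact absurd (reach_mem_comp hy ((h1.tail h2).tail ⟨h2.2.1, hd, hle2, hle⟩)) hdC

/-- Each component of `t` contains an element incomparable to `x`. -/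
lemma comp_exists_inc {t : Finset α} {x y : α} (hx : x ∉ t) (hy : y ∈ t)
    (hconn : IncConn (insert x t)) :
    ∃ a ∈ IncComp t y, ¬ a ≤ x ∧ ¬ x ≤ a := by
  have hreach : Relation.ReflTransGen (Rinc (insert x t)) y x :=
    hconn y (Finset.mem_insert_of_mem hy) x (Finset.mem_insert_self x t)
  have key : ∀ c, Relation.ReflTransGen (Rinc (insert x t)) y c →
      c ∈ IncComp t y ∨ ∃ a ∈ IncComp t y, ¬ a ≤ x ∧ ¬ x ≤ a := by
    intro c h
    induction h with
    | refl => exact Or.inl (mem_IncComp.2 ⟨hy, .refl⟩)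
    | @tail b c h1 h2 ih =>
        rcases ih with hb | he
        · by_cases hcx : c = x
          · exact Or.inr ⟨b, hb, hcx ▸ h2.2.2.1, hcx ▸ h2.2.2.2⟩
          · have hct : c ∈ t := Finset.mem_of_mem_insert_of_ne h2.2.1 hcx
            have hbt : b ∈ t := IncComp_subset hb
            exact Or.inl (mem_IncComp.2
              ⟨hct, (mem_IncComp.1 hb).2.tail ⟨hbt, hct, h2.2.2.1, h2.2.2.2⟩⟩)
        · exact Or.inr he
  rcases key x hreach with h | h
  · exact absurd (IncComp_subset h) hx
  · exact h

/-- Removing the component of `y` keeps `x` connected to the rest. -/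
lemma conn_insert_sdiff {t : Finset α} {x y : α} (hx : x ∉ t) (hy : y ∈ t)
    (hconn : IncConn (insert x t)) :
    IncConn (insert x (t \ IncComp t y)) := by
  set t' := t \ IncComp t y with ht'
  have hreach_x : ∀ a ∈ t', Relation.ReflTransGen (Rinc (insert x t')) a x := by
    intro a ha
    have hat : a ∈ t := (Finset.mem_sdiff.1 ha).1
    have haC : a ∉ IncComp t y := (Finset.mem_sdiff.1 ha).2
    obtain ⟨b, hbC, hb1, hb2⟩ := comp_exists_inc hx hat hconn
    have hsub : IncComp t a ⊆ t' := by
      intro c hc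
      obtain ⟨hct, hrac⟩ := mem_IncComp.1 hc
      refine Finset.mem_sdiff.2 ⟨hct, fun hcy => ?_⟩
      exact haC (reach_mem_comp hy ((mem_IncComp.1 hcy).2.trans (rinc_reach_symm hrac)))
    have h1 : Relation.ReflTransGen (Rinc (insert x t')) a b :=
      rinc_reach_mono (hsub.trans (Finset.subset_insert x t'))
        (reach_comp_up hat (mem_IncComp.1 hbC).2)
    exact h1.tail ⟨Finset.mem_insert_of_mem (hsub hbC), Finset.mem_insert_self x t', hb1, hb2⟩
  intro a ha b hb
  have hax : Relation.ReflTransGen (Rinc (insert x t')) a x := by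
    rcases Finset.mem_insert.1 ha with rfl | ha'
    · exact .refl
    · exact hreach_x a ha'
  have hbx : Relation.ReflTransGen (Rinc (insert x t')) b x := by
    rcases Finset.mem_insert.1 hb with rfl | hb'
    · exact .refl
    · exact hreach_x b hb'
  exact hax.trans (rinc_reach_symm hbx)

/-- Rotating a Hamiltonian cycle to end at a prescribed vertex. -/
lemma rotate_cycle {l : List α} {a : α}
    (hnd : l.Nodup) (hch : l.Chain' (fun u v => ¬ u < v))
    (hcyc : ∀ u ∈ l.getLast?, ∀ v ∈ l.head?, ¬ u < v) (ha : a ∈ l) :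
    ∃ l' : List α, l'.Nodup ∧ l'.toFinset = l.toFinset ∧
      l'.Chain' (fun u v => ¬ u < v) ∧ l'.getLast? = some a := by
  obtain ⟨l₁, l₂, rfl⟩ := List.append_of_mem ha
  have hperm : (l₂ ++ l₁ ++ [a]).Perm (l₁ ++ a :: l₂) :=
    (List.perm_append_comm.trans (List.perm_append_comm.append_left [a])).trans
      (List.perm_middle (a := a) (l₁ := l₁) (l₂ := l₂)).symm
  obtain ⟨ch1, ch2, e12⟩ := List.isChain_append.1 hch
  obtain ⟨ha2, chl₂⟩ := List.isChain_cons.1 ch2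
  refine ⟨l₂ ++ l₁ ++ [a], hperm.nodup_iff.2 hnd, ?_, ?_, List.getLast?_concat⟩
  · ext z; simp only [List.mem_toFinset, hperm.mem_iff]
  · refine List.isChain_append.2 ⟨List.isChain_append.2 ⟨chl₂, ch1, ?_⟩, List.isChain_singleton a, ?_⟩
    · intro u hu v hv
      exact hcyc u (List.mem_getLast?_append_of_mem_getLast?
          (show u ∈ (a :: l₂).getLast? from List.mem_getLast?_append_of_mem_getLast? (l₁ := [a]) hu))
        v (List.mem_head?_append_of_mem_head? hv)
    · intro u hu v hv
      simp only [List.head?_cons, Option.mem_some_iff] at hv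
      subst hv
      rcases eq_or_ne l₁ [] with rfl | hl₁
      · simp only [List.append_nil] at hu
        exact hcyc u (List.mem_getLast?_append_of_mem_getLast? (l₁ := [a]) hu) a (by simp)
      · rw [List.getLast?_append_of_ne_nil _ hl₁] at hu
        exact e12 u hu a (by simp)

/-- The main induction: existence of Hamiltonian cycles (first clause) and of
Hamiltonian paths through `t` avoiding going up, ending below nothing under `x`
(second clause). -/
lemma ham_induction : ∀ n : ℕ,
    (∀ s : Finset α, s.card = n → 2 ≤ n → IncConn s →
      ∃ l : List α, l.Nodup ∧ l.toFinset = s ∧ l.Chain' (fun u v => ¬ u < v) ∧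
        ∀ u ∈ l.getLast?, ∀ v ∈ l.head?, ¬ u < v) ∧
    (∀ (t : Finset α) (x : α), t.card = n → t.Nonempty → x ∉ t →
      (∀ z ∈ t, ¬ x < z) → IncConn (insert x t) →
      ∃ l : List α, l.Nodup ∧ l.toFinset = t ∧ l.Chain' (fun u v => ¬ u < v) ∧
        ∀ u ∈ l.getLast?, ¬ u < x) := by
  intro n
  induction n using Nat.strong_induction_on with
  | _ n ih =>
  have hmain : ∀ s : Finset α, s.card = n → 2 ≤ n → IncConn s →
      ∃ l : List α, l.Nodup ∧ l.toFinset = s ∧ l.Chain' (fun u v => ¬ u < v) ∧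
        ∀ u ∈ l.getLast?, ∀ v ∈ l.head?, ¬ u < v := by
    intro s hcard h2 hconn
    obtain ⟨x, hxs, hxmax⟩ := s.exists_maximal (Finset.card_pos.1 (by omega))
    replace hxmax : ∀ z ∈ s, ¬ x < z := fun z hz h => h.not_ge (hxmax hz h.le)
    set t := s.erase x with htdef
    have hxt : x ∉ t := Finset.notMem_erase x s
    have htcard : t.card = n - 1 := by rw [htdef, Finset.card_erase_of_mem hxs, hcard]
    have htne : t.Nonempty := Finset.card_pos.1 (by omega)
    have hins : insert x t = s := Finset.insert_erase hxs
    obtain ⟨l, hnd, hts, hch, hlast⟩ := (ih (n - 1) (by omega)).2 t x htcard htne hxt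
      (fun z hz => hxmax z (Finset.mem_of_mem_erase hz)) (by rw [hins]; exact hconn)
    have hlne : l ≠ [] := by
      intro h
      rw [h] at hts
      exact htne.ne_empty (by simpa using hts.symm)
    refine ⟨x :: l, ?_, ?_, ?_, ?_⟩
    · exact List.nodup_cons.2 ⟨fun hxl => hxt (by rw [← hts]; exact List.mem_toFinset.2 hxl), hnd⟩
    · rw [List.toFinset_cons, hts, hins]
    · refine List.isChain_cons.2 ⟨?_, hch⟩
      intro v hv
      have hvt : v ∈ t := by rw [← hts]; exact List.mem_toFinset.2 (List.mem_of_mem_head? hv)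
      exact hxmax v (Finset.mem_of_mem_erase hvt)
    · intro u hu v hv
      simp only [List.head?_cons, Option.mem_some_iff] at hv
      subst hv
      rw [show x :: l = [x] ++ l from rfl, List.getLast?_append_of_ne_nil _ hlne] at hu
      exact hlast u hu
  refine ⟨hmain, ?_⟩
  intro t x hcard hne hx hmax hconn
  obtain ⟨y, hy, hymax⟩ := t.exists_maximal hne
  replace hymax : ∀ z ∈ t, ¬ y < z := fun z hz h => h.not_ge (hymax hz h.le)
  obtain ⟨a, haC, hax1, hax2⟩ := comp_exists_inc hx hy hconn
  have hnax : ¬ a < x := fun h => hax1 h.le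
  have hn1 : 1 ≤ n := by
    rw [← hcard]; exact Finset.card_pos.2 hne
  by_cases hCt : IncComp t y = t
  · -- the whole of `t` is one component
    by_cases h1 : t.card = 1
    · obtain ⟨b, hb⟩ := Finset.card_eq_one.1 h1
      have hab : a = b := by
        have h := IncComp_subset haC
        rw [hb] at h
        simpa using h
      refine ⟨[a], by simp, by simp [hab, hb], List.isChain_singleton a, ?_⟩
      intro u hu
      simp only [List.getLast?_singleton, Option.mem_some_iff] at hu
      subst hu
      exact hnax
    · have hconn_t : IncConn t := hCt ▸ conn_comp hy
      obtain ⟨l, hnd, hts, hch, hcyc⟩ := hmain t hcard (by omega) hconn_t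
      have hal : a ∈ l := by
        rw [← List.mem_toFinset, hts]
        exact IncComp_subset haC
      obtain ⟨l', h1', h2', h3', h4'⟩ := rotate_cycle hnd hch hcyc hal
      refine ⟨l', h1', by rw [h2', hts], h3', ?_⟩
      intro u hu
      rw [h4'] at hu
      simp only [Option.mem_some_iff] at hu
      subst hu
      exact hnax
  · -- split off the top component `C`
    have hCsub : IncComp t y ⊆ t := IncComp_subset
    have hCss : IncComp t y ⊂ t := ssubset_of_subset_of_ne hCsub hCt
    set C := IncComp t y with hCdef
    set t' := t \ C with ht'
    have ht'ne : t'.Nonempty := by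
      obtain ⟨z, hzt, hzC⟩ := Finset.exists_of_ssubset hCss
      exact ⟨z, Finset.mem_sdiff.2 ⟨hzt, hzC⟩⟩
    have hCne : C.Nonempty := ⟨y, mem_IncComp.2 ⟨hy, .refl⟩⟩
    have ht'card : t'.card < n := by
      rw [ht', Finset.card_sdiff_of_subset hCsub, hcard]
      have := Finset.card_pos.2 hCne
      omega
    have hconn' := conn_insert_sdiff hx hy hconn
    obtain ⟨l₂, hnd₂, hts₂, hch₂, hlast₂⟩ := (ih t'.card ht'card).2 t' x rfl ht'ne
      (fun h => hx (Finset.mem_sdiff.1 h).1) (fun z hz => hmax z (Finset.mem_sdiff.1 hz).1) hconn'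
    obtain ⟨l₁, hnd₁, hts₁, hch₁⟩ : ∃ l₁ : List α, l₁.Nodup ∧ l₁.toFinset = C ∧
        l₁.Chain' (fun u v => ¬ u < v) := by
      by_cases hc1 : C.card = 1
      · obtain ⟨b, hb⟩ := Finset.card_eq_one.1 hc1
        exact ⟨[b], by simp, by simp [hb], List.isChain_singleton b⟩
      · have hCcard : C.card < n := by
          have := Finset.card_lt_card hCss
          omega
        have hC2 : 2 ≤ C.card := by
          have := Finset.card_pos.2 hCne
          omega
        obtain ⟨l, hnd, hts, hch, -⟩ := (ih C.card hCcard).1 C rfl hC2 (conn_comp hy)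
        exact ⟨l, hnd, hts, hch⟩
    have hl₂ne : l₂ ≠ [] := by
      intro h
      rw [h] at hts₂
      exact ht'ne.ne_empty (by simpa using hts₂.symm)
    refine ⟨l₁ ++ l₂, ?_, ?_, ?_, ?_⟩
    · refine hnd₁.append hnd₂ ?_
      intro u hu1 hu2
      have h1 : u ∈ C := by rw [← hts₁] at *; exact List.mem_toFinset.2 hu1
      have h2 : u ∈ t' := by rw [← hts₂]; exact List.mem_toFinset.2 hu2
      exact (Finset.mem_sdiff.1 h2).2 h1
    · rw [List.toFinset_append, hts₁, hts₂, ht', Finset.union_sdiff_of_subset hCsub]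
    · refine List.isChain_append.2 ⟨hch₁, hch₂, ?_⟩
      intro u hu v hv
      have huC : u ∈ C := by
        rw [← hts₁]; exact List.mem_toFinset.2 (List.mem_of_mem_getLast? hu)
      have hvt' : v ∈ t' := by
        rw [← hts₂]; exact List.mem_toFinset.2 (List.mem_of_mem_head? hv)
      have hvu : v < u := comp_top hy hymax (Finset.mem_sdiff.1 hvt').1
        (Finset.mem_sdiff.1 hvt').2 huC
      exact lt_asymm hvu
    · intro u hu
      rw [List.getLast?_append_of_ne_nil _ hl₂ne] at hu
      exact hlast₂ u hu

end AuxHam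

theorem inc_connected_hamiltonian_cycle {α : Type*} [Fintype α] [PartialOrder α]
    (n : ℕ) (hn : n = Fintype.card α) (hn2 : 2 ≤ n)
    (hconn : (incGraph α).Connected) :
    ∃ v : Fin n ≃ α, ∀ i : Fin n,
      ¬ v i < v ⟨((i : ℕ) + 1) % n, Nat.mod_lt _ (by omega)⟩ := by
  classical
  have hcu : IncConn (Finset.univ : Finset α) := by
    intro a _ b _
    obtain ⟨w⟩ := hconn.preconnected a b
    induction w with
    | nil => exact .refl
    | cons h p ihp =>
        exact Relation.ReflTransGen.head
          ⟨Finset.mem_univ _, Finset.mem_univ _, h.2.1, h.2.2⟩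
          (ihp (Finset.mem_univ _) (Finset.mem_univ _))
  obtain ⟨l, hnd, hts, hch, hcyc⟩ := (ham_induction n).1 Finset.univ
    (by rw [Finset.card_univ]; exact hn.symm) hn2 hcu
  have hlen : l.length = n := by
    rw [← List.toFinset_card_of_nodup hnd, hts, Finset.card_univ, hn]
  have key : ∀ (j k : ℕ) (hj : j < l.length) (hk : k < l.length),
      k = (j + 1) % n → ¬ l.get ⟨j, hj⟩ < l.get ⟨k, hk⟩ := by
    intro j k hj hk hkeq
    by_cases hjn : j + 1 < n
    · subst hkeq
      have hmod : (j + 1) % n = j + 1 := Nat.mod_eq_of_lt hjn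
      have e : (⟨(j + 1) % n, hk⟩ : Fin l.length) = ⟨j + 1, by omega⟩ := Fin.ext hmod
      rw [e]
      exact List.isChain_iff_getElem.1 hch j (by omega)
    · have hjeq : j + 1 = n := by omega
      have hk0 : k = 0 := by rw [hkeq, hjeq, Nat.mod_self]
      subst hk0
      have hu : l.get ⟨j, hj⟩ ∈ l.getLast? := by
        rw [List.getLast?_eq_getElem?]
        have hjl : l.length - 1 = j := by omega
        rw [hjl]
        simp [List.getElem?_eq_getElem hj, List.get_eq_getElem]
      have hv : l.get ⟨0, hk⟩ ∈ l.head? := by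
        cases l with
        | nil => simp at hj
        | cons hd tl => simp
      exact hcyc _ hu _ hv
  have hinj : Function.Injective (fun i : Fin n => l.get (Fin.cast hlen.symm i)) := by
    intro i j hij
    have h := List.nodup_iff_injective_get.1 hnd hij
    have h2 := congrArg Fin.val h
    simp only [Fin.coe_cast] at h2
    exact Fin.ext h2
  have hbij : Function.Bijective (fun i : Fin n => l.get (Fin.cast hlen.symm i)) :=
    (Fintype.bijective_iff_injective_and_card _).2 ⟨hinj, by simp [hn]⟩
  refine ⟨Equiv.ofBijective _ hbij, ?_⟩
  intro i
  exact key i.1 (((i : ℕ) + 1) % n) (by omega) (by rw [hlen]; exact Nat.mod_lt _ (by omega)) rfl
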